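/- Let K ⊆ ℝⁿ be a nonempty closed convex set, let a, b ∈ K and v ∈ ℝⁿ, and suppose w ∈ ℝⁿ is such that (Ψ_K(a + δv) − a)/δ → w as δ → 0⁺. Then ⟨b − a, v − w⟩ ≤ 0. -/

import Mathlib

open Filter Set

/-- Metric projection onto a set: the nearest point of `K` to `y`
(well defined when `K` is nonempty, closed and convex). -/
noncomputable def metricProj {E : Type*} [NormedAddCommGroup E] [InnerProductSpace ℝ E]
    (K : Set E) (y : E) : E :=
  Classical.epsilon fun p => p ∈ K ∧ ∀ z ∈ K, ‖y - p‖ ≤ ‖y - z‖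

lemma metricProj_spec {E : Type*} [NormedAddCommGroup E] [InnerProductSpace ℝ E]
    [CompleteSpace E] {K : Set E} (hKne : K.Nonempty) (hKcl : IsClosed K)
    (hKcv : Convex ℝ K) (y : E) :
    metricProj K y ∈ K ∧ ∀ z ∈ K, ‖y - metricProj K y‖ ≤ ‖y - z‖ := by
  apply Classical.epsilon_spec (p := fun p => p ∈ K ∧ ∀ z ∈ K, ‖y - p‖ ≤ ‖y - z‖)
  obtain ⟨u, huK, hu⟩ := exists_norm_eq_iInf_of_complete_convex hKne
    (hKcl.isComplete) hKcv y
  haveI := hKne.to_subtype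
  refine ⟨u, huK, fun z hz => ?_⟩
  rw [hu]
  exact ciInf_le ⟨0, fun r ⟨z', hz'⟩ => hz' ▸ norm_nonneg _⟩ (⟨z, hz⟩ : K)

lemma metricProj_inner {E : Type*} [NormedAddCommGroup E] [InnerProductSpace ℝ E]
    [CompleteSpace E] {K : Set E} (hKne : K.Nonempty) (hKcl : IsClosed K)
    (hKcv : Convex ℝ K) (y : E) :
    ∀ z ∈ K, inner ℝ (y - metricProj K y) (z - metricProj K y) ≤ (0 : ℝ) := by
  obtain ⟨hmem, hle⟩ := metricProj_spec hKne hKcl hKcv y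
  haveI := hKne.to_subtype
  have heq : ‖y - metricProj K y‖ = ⨅ z : K, ‖y - z‖ := by
    apply le_antisymm
    · exact le_ciInf fun z => hle z z.2
    · exact ciInf_le ⟨0, fun r ⟨z', hz'⟩ => hz' ▸ norm_nonneg _⟩
        (⟨metricProj K y, hmem⟩ : K)
  exact (norm_eq_iInf_iff_real_inner_le_zero hKcv hmem).mp heq

/-- **Technical lemma on the vector field projection.** For a nonempty closed convex
`K ⊆ ℝⁿ`, points `a, b ∈ K`, `v ∈ ℝⁿ`, and `w = Π_K[a,v]` (the vector field projection,
i.e. the one-sided limit of `(Ψ_K(a + δ v) - a)/δ` as `δ → 0⁺`), we have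
`⟨b - a, v - w⟩ ≤ 0`. -/
theorem inner_sub_vfProj_nonpos
    {n : ℕ} (K : Set (EuclideanSpace ℝ (Fin n)))
    (hKne : K.Nonempty) (hKcl : IsClosed K) (hKcv : Convex ℝ K)
    (a b : EuclideanSpace ℝ (Fin n)) (ha : a ∈ K) (hb : b ∈ K)
    (v w : EuclideanSpace ℝ (Fin n))
    (hw : Tendsto (fun δ : ℝ => δ⁻¹ • (metricProj K (a + δ • v) - a))
      (nhdsWithin 0 (Set.Ioi 0)) (nhds w)) :
    inner ℝ (b - a) (v - w) ≤ (0 : ℝ) := by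
  set q : ℝ → EuclideanSpace ℝ (Fin n) :=
    fun δ => δ⁻¹ • (metricProj K (a + δ • v) - a) with hq
  -- the key inequality for each δ > 0
  have key : ∀ δ : ℝ, δ ∈ Set.Ioi (0:ℝ) →
      inner ℝ (v - q δ) (b - a - δ • q δ) ≤ (0 : ℝ) := by
    intro δ hδ
    have hδ0 : (δ : ℝ) ≠ 0 := ne_of_gt hδ
    have h := metricProj_inner hKne hKcl hKcv (a + δ • v) b hb
    have hrw : a + δ • v - metricProj K (a + δ • v) = δ • (v - q δ) := by
      simp only [hq, smul_sub, smul_smul, mul_inv_cancel₀ hδ0, one_smul]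
      abel
    have hrw2 : b - metricProj K (a + δ • v) = b - a - δ • q δ := by
      simp only [hq, smul_smul, mul_inv_cancel₀ hδ0, one_smul]
      abel
    rw [hrw, hrw2, real_inner_smul_left] at h
    exact nonpos_of_mul_nonpos_right h hδ
  -- pass to the limit
  have hid : Tendsto (fun δ : ℝ => δ) (nhdsWithin 0 (Set.Ioi 0)) (nhds (0:ℝ)) :=
    tendsto_id.mono_left nhdsWithin_le_nhds
  have hsmul : Tendsto (fun δ : ℝ => δ • q δ) (nhdsWithin 0 (Set.Ioi 0))
      (nhds ((0:ℝ) • w)) := hid.smul hw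
  rw [zero_smul] at hsmul
  have h1 : Tendsto (fun δ : ℝ => v - q δ) (nhdsWithin 0 (Set.Ioi 0))
      (nhds (v - w)) := tendsto_const_nhds.sub hw
  have h2 : Tendsto (fun δ : ℝ => b - a - δ • q δ) (nhdsWithin 0 (Set.Ioi 0))
      (nhds (b - a - 0)) := tendsto_const_nhds.sub hsmul
  rw [sub_zero] at h2
  have h3 : Tendsto (fun δ : ℝ => (inner ℝ (v - q δ) (b - a - δ • q δ) : ℝ))
      (nhdsWithin 0 (Set.Ioi 0)) (nhds (inner ℝ (v - w) (b - a))) := h1.inner h2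
  have hlim : inner ℝ (v - w) (b - a) ≤ (0:ℝ) := by
    refine le_of_tendsto h3 ?_
    filter_upwards [self_mem_nhdsWithin] with δ hδ using key δ hδ
  rw [real_inner_comm] at hlim
  exact hlim
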